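/- Let t ∈ ℤ and let λ = (λ^•, λ^∘) and μ = (μ^•, μ^∘) be bipartitions such that core(d'_λ) = core(d'_μ) as functions ℤ → {>, <, ∘}. Then for every a ∈ ℤ, n_a(λ^•) − n_{−(a+t)}(λ^∘) = n_a(μ^•) − n_{−(a+t)}(μ^∘). -/
import Mathlib


/-- A partition: a weakly decreasing sequence of natural numbers that is eventually zero.
Here `part i` denotes the part `ν_{i+1}` (0-based indexing of the rows `i ≥ 1`). -/
structure YPartition where
  part : ℕ → ℕ
  antitone : Antitone part
  eventually_zero : ∃ N : ℕ, ∀ i : ℕ, N ≤ i → part i = 0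

/-- `AddBox ν μ a` : the Young diagram of `μ` is obtained from that of `ν` by adding a
single cell of content `a`, i.e. `μ ∈ ν + □_a`.  (The new cell in 0-based row `i` sits in
0-based column `ν.part i`, so its content is `(ν.part i + 1) - (i + 1) = ν.part i - i`.) -/
def AddBox (ν μ : YPartition) (a : ℤ) : Prop :=
  ∃ i : ℕ, μ.part i = ν.part i + 1 ∧ (∀ j : ℕ, j ≠ i → μ.part j = ν.part j) ∧
    (ν.part i : ℤ) - (i : ℤ) = a

/-- `RemoveBox ν μ a` : the Young diagram of `μ` is obtained from that of `ν` by removing a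
single cell of content `a`, i.e. `μ ∈ ν - □_a`. -/
def RemoveBox (ν μ : YPartition) (a : ℤ) : Prop := AddBox μ ν a

open Classical in
/-- `n_a(ν)`: `1` if `ν + □_a ≠ ∅`, `-1` if `ν - □_a ≠ ∅`, and `0` otherwise. -/
noncomputable def nval (ν : YPartition) (a : ℤ) : ℤ :=
  if ∃ μ, AddBox ν μ a then 1 else if ∃ μ, RemoveBox ν μ a then -1 else 0

/-- `C_λ := {λ^•_i + t - i : i ≥ 1}` (this set is also `C'_λ`). -/
def Cset (t : ℤ) (lam : YPartition × YPartition) : Set ℤ :=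
  {s : ℤ | ∃ i : ℕ, (lam.1.part i : ℤ) + t - ((i : ℤ) + 1) = s}

/-- `D'_λ := ℤ \\ {i - λ^∘_i - 1 : i ≥ 1}`. -/
def D'set (lam : YPartition × YPartition) : Set ℤ :=
  {s : ℤ | ¬ ∃ i : ℕ, ((i : ℤ) + 1) - (lam.2.part i : ℤ) - 1 = s}

/-- Labels of core diagrams: `>`, `<`, `∘`. -/
inductive CoreLabel | gt | lt | circ
deriving DecidableEq

open Classical in
/-- The core `core(d'_λ)` of the weight diagram `d'_λ`: all crosses replaced by `∘`. -/
noncomputable def coreDiag (t : ℤ) (lam : YPartition × YPartition) (s : ℤ) : CoreLabel :=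
  if s ∈ Cset t lam ∧ s ∉ D'set lam then .gt
  else if s ∈ D'set lam ∧ s ∉ Cset t lam then .lt
  else .circ


def Bset (ν : YPartition) : Set ℤ := {s : ℤ | ∃ i : ℕ, (ν.part i : ℤ) - ((i : ℤ) + 1) = s}

lemma add_iff (ν : YPartition) (a : ℤ) :
    (∃ μ, AddBox ν μ a) ↔ (a - 1 ∈ Bset ν ∧ a ∉ Bset ν) := by
  constructor
  · rintro ⟨μ, i, h1, h2, h3⟩
    refine ⟨⟨i, by omega⟩, ?_⟩
    rintro ⟨j, hj⟩
    have hji : j ≠ i := by rintro rfl; omega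
    have h2j := h2 j hji
    rcases lt_or_gt_of_ne hji with hlt | hgt
    · have hm : ν.part i ≤ ν.part j := ν.antitone hlt.le
      have hm2 : μ.part i ≤ μ.part j := μ.antitone hlt.le
      omega
    · have hm : ν.part j ≤ ν.part i := ν.antitone hgt.le
      omega
  · rintro ⟨⟨i, hi⟩, hnot⟩
    have hkey : ∀ j, j < i → ν.part i < ν.part j := by
      intro j hj
      by_contra hc
      push_neg at hc
      have ha1 : ν.part (i-1) ≤ ν.part j := ν.antitone (by omega)
      have ha2 : ν.part i ≤ ν.part (i-1) := ν.antitone (by omega)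
      exact hnot ⟨i-1, by omega⟩
    have hN := ν.eventually_zero
    obtain ⟨N, hN⟩ := hN
    refine ⟨⟨fun j => if j = i then ν.part i + 1 else ν.part j, ?_, ?_⟩, i, ?_, ?_, by omega⟩
    · intro j k hjk
      dsimp only
      split_ifs with hk hj hj
      · exact le_rfl
      · have : j < i := by omega
        exact hkey j this
      · subst hj
        have := ν.antitone hjk
        omega
      · exact ν.antitone hjk
    · refine ⟨max N (i+1), fun j hj => ?_⟩
      have : j ≠ i := by omega
      simp only [this, if_false]
      exact hN j (by omega)
    · simp
    · intro j hj; simp [hj]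

lemma remove_iff (ν : YPartition) (a : ℤ) :
    (∃ μ, RemoveBox ν μ a) ↔ (a ∈ Bset ν ∧ a - 1 ∉ Bset ν) := by
  constructor
  · rintro ⟨μ, i, h1, h2, h3⟩
    refine ⟨⟨i, by omega⟩, ?_⟩
    rintro ⟨j, hj⟩
    have hji : j ≠ i := by rintro rfl; omega
    have h2j := h2 j hji
    rcases lt_or_gt_of_ne hji with hlt | hgt
    · have hm : ν.part i ≤ ν.part j := ν.antitone hlt.le
      omega
    · have hm : ν.part j ≤ ν.part i := ν.antitone hgt.le
      have hm2 : μ.part j ≤ μ.part i := μ.antitone hgt.le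
      omega
  · rintro ⟨⟨i, hi⟩, hnot⟩
    have hle : ν.part (i+1) ≤ ν.part i := ν.antitone (Nat.le_succ i)
    have hpos : 1 ≤ ν.part i := by
      by_contra hc
      exact hnot ⟨i+1, by push_cast; omega⟩
    have hkey : ν.part (i+1) < ν.part i := by
      by_contra hc
      exact hnot ⟨i+1, by push_cast; omega⟩
    have hkey2 : ∀ k, i < k → ν.part k < ν.part i := by
      intro k hk
      have := ν.antitone (show i+1 ≤ k by omega)
      omega
    obtain ⟨N, hN⟩ := ν.eventually_zero
    refine ⟨⟨fun j => if j = i then ν.part i - 1 else ν.part j, ?_, ?_⟩, i, ?_, ?_, ?_⟩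
    · intro j k hjk
      dsimp only
      split_ifs with hk hj hj
      · exact le_rfl
      · have : j < i := by omega
        have := ν.antitone (show j ≤ i from this.le)
        omega
      · have := hkey2 k (by omega)
        omega
      · exact ν.antitone hjk
    · refine ⟨max N (i+1), fun j hj => ?_⟩
      have : j ≠ i := by omega
      simp only [this, if_false]
      exact hN j (by omega)
    · show ν.part i = (if i = i then ν.part i - 1 else ν.part i) + 1
      simp; omega
    · intro j hj; simp [hj]
    · show ((if i = i then ν.part i - 1 else ν.part i : ℕ) : ℤ) - i = a
      simp; omega

open Classical in
lemma nval_eq (ν : YPartition) (a : ℤ) :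
    nval ν a = (if a - 1 ∈ Bset ν then 1 else 0) - (if a ∈ Bset ν then 1 else 0) := by
  have hA := add_iff ν a
  have hR := remove_iff ν a
  unfold nval
  split_ifs <;> simp_all

lemma mem_C_iff (t : ℤ) (lam : YPartition × YPartition) (s x : ℤ) (hx : x = s - t) :
    x ∈ Bset lam.1 ↔ s ∈ Cset t lam := by
  subst hx
  exact exists_congr fun i => by constructor <;> intro h <;> omega

lemma mem_B2_iff (lam : YPartition × YPartition) (s x : ℤ) (hx : x = -s - 1) :
    x ∈ Bset lam.2 ↔ s ∉ D'set lam := by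
  subst hx
  rw [D'set, Set.mem_setOf_eq, not_not]
  exact exists_congr fun i => by constructor <;> intro h <;> omega

def labelVal : CoreLabel → ℤ
  | .gt => 1
  | .lt => -1
  | .circ => 0

open Classical in
lemma gfun_eq (t : ℤ) (lam : YPartition × YPartition) (s : ℤ) :
    ((if s ∈ Cset t lam then (1 : ℤ) else 0) - (if s ∈ D'set lam then 1 else 0))
      = labelVal (coreDiag t lam s) := by
  unfold coreDiag
  by_cases hc : s ∈ Cset t lam <;> by_cases hd : s ∈ D'set lam <;>
    simp [hc, hd, labelVal]

open Classical in
lemma nval_sub_eq (t : ℤ) (lam : YPartition × YPartition) (a : ℤ) :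
    nval lam.1 a - nval lam.2 (-(a + t)) =
      labelVal (coreDiag t lam (a + t - 1)) - labelVal (coreDiag t lam (a + t)) := by
  rw [nval_eq, nval_eq, ← gfun_eq, ← gfun_eq]
  have e1 : (a - 1 ∈ Bset lam.1) ↔ (a + t - 1 ∈ Cset t lam) :=
    mem_C_iff t lam (a + t - 1) (a - 1) (by ring)
  have e2 : (a ∈ Bset lam.1) ↔ (a + t ∈ Cset t lam) :=
    mem_C_iff t lam (a + t) a (by ring)
  have e3 : (-(a + t) - 1 ∈ Bset lam.2) ↔ (a + t) ∉ D'set lam :=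
    mem_B2_iff lam (a + t) (-(a + t) - 1) (by ring)
  have e4 : (-(a + t) ∈ Bset lam.2) ↔ (a + t - 1) ∉ D'set lam :=
    mem_B2_iff lam (a + t - 1) (-(a + t)) (by ring)
  simp only [e1, e2, e3, e4]
  by_cases hd1 : a + t - 1 ∈ D'set lam <;> by_cases hd2 : a + t ∈ D'set lam <;>
    simp [hd1, hd2] <;> ring

/-- If two bipartitions have weight diagrams `d'_λ`, `d'_μ` with equal cores, then for every
`a ∈ ℤ`, `n_a(λ^•) - n_{-(a+t)}(λ^∘) = n_a(μ^•) - n_{-(a+t)}(μ^∘)`. -/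
theorem equal_cores_weights (t : ℤ) (lam mu : YPartition × YPartition)
    (h : ∀ s : ℤ, coreDiag t lam s = coreDiag t mu s) (a : ℤ) :
    nval lam.1 a - nval lam.2 (-(a + t)) = nval mu.1 a - nval mu.2 (-(a + t)) := by
  rw [nval_sub_eq, nval_sub_eq, h (a + t - 1), h (a + t)]
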